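/- Let μ, a_8, a_9 be real numbers with 0.6 ≤ μ ≤ 0.64759, |a_8| < μ, |a_9| < μ, and set a_6 = (1 + μ − 4μ²)/(1 + μ). Let M be the 5 × 5 symmetric matrix [[1, −μ, −μ, a_6, −μ], [−μ, 1, a_8, −μ, a_9], [−μ, a_8, 1, μ, μ], [a_6, −μ, μ, 1, μ], [−μ, a_9, μ, μ, 1]]. If every 4 × 4 minor of M vanishes (equivalently rank(M) ≤ 3), then a_9 = −a_8 and a_8² = (1 + μ − 3μ² − μ³)/(2 + 4μ). -/

import Mathlib

open Module Submodule

/-- If a `5 × 5` real matrix has rank at most 3, every `4 × 4` minor vanishes. -/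
lemma det_submatrix_eq_zero_of_rank_le {A : Matrix (Fin 5) (Fin 5) ℝ} (hA : A.rank ≤ 3)
    (f g : Fin 4 → Fin 5) : (A.submatrix f g).det = 0 := by
  by_contra hdet
  have hunit : IsUnit (A.submatrix f g) :=
    (Matrix.isUnit_iff_isUnit_det _).2 (isUnit_iff_ne_zero.2 hdet)
  have hli : LinearIndependent ℝ (A.submatrix f g) :=
    Matrix.linearIndependent_rows_iff_isUnit.2 hunit
  have h2 : LinearIndependent ℝ (A ∘ f) := by
    apply LinearIndependent.of_comp (LinearMap.funLeft ℝ ℝ g)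
    exact hli
  have h4 : 4 ≤ A.rank := by
    rw [Matrix.rank_eq_finrank_span_row]
    have hcard := finrank_span_eq_card h2
    calc (4 : ℕ) = finrank ℝ (span ℝ (Set.range (A ∘ f))) := by
          rw [hcard]; simp
      _ ≤ finrank ℝ (span ℝ (Set.range A)) :=
          Submodule.finrank_mono (span_mono (Set.range_comp_subset_range f A))
  omega

set_option maxHeartbeats 1600000 in
/-- **Step 2.** Let `0.6 ≤ μ ≤ 0.64759`, `|a₈| < μ`, `|a₉| < μ`, and set
`a₆ = (1 + μ − 4μ²)/(1 + μ)`. If the `5 × 5` principal submatrix `M` on rows and columns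
`{2, 3, 5, 6, 7}` has rank at most 3 (i.e. all its `4 × 4` minors vanish), then
`a₉ = −a₈` and `a₈² = (1 + μ − 3μ² − μ³)/(2 + 4μ)`. -/
theorem step2 (μ a8 a9 : ℝ) (hμ1 : (0.6 : ℝ) ≤ μ) (hμ2 : μ ≤ 0.64759)
    (h8 : |a8| < μ) (h9 : |a9| < μ) :
    let a6 : ℝ := (1 + μ - 4 * μ ^ 2) / (1 + μ)
    let M : Matrix (Fin 5) (Fin 5) ℝ :=
      !![1, -μ, -μ, a6, -μ;
         -μ, 1, a8, -μ, a9;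
         -μ, a8, 1, μ, μ;
         a6, -μ, μ, 1, μ;
         -μ, a9, μ, μ, 1]
    M.rank ≤ 3 → a9 = -a8 ∧ a8 ^ 2 = (1 + μ - 3 * μ ^ 2 - μ ^ 3) / (2 + 4 * μ) := by
  intro a6 M hrank
  have hμpos : (0 : ℝ) < μ := by linarith
  have h1μ : (1 : ℝ) + μ ≠ 0 := by positivity
  have h1mμ : (0 : ℝ) < 1 - μ := by linarith
  have h12μ : (0 : ℝ) < 1 + 2 * μ := by linarith
  have h6 : a6 * (1 + μ) = 1 + μ - 4 * μ ^ 2 := by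
    show ((1 + μ - 4 * μ ^ 2) / (1 + μ)) * (1 + μ) = 1 + μ - 4 * μ ^ 2
    field_simp
  -- first minor: rows and columns {0,1,2,3}
  have hd1 : (!![(1:ℝ), -μ, -μ, a6; -μ, 1, a8, -μ; -μ, a8, 1, μ; a6, -μ, μ, 1]).det = 0 := by
    have heq : !![(1:ℝ), -μ, -μ, a6; -μ, 1, a8, -μ; -μ, a8, 1, μ; a6, -μ, μ, 1]
        = M.submatrix ![0,1,2,3] ![0,1,2,3] := by
      ext i j; fin_cases i <;> fin_cases j <;> rfl
    rw [heq]
    exact det_submatrix_eq_zero_of_rank_le hrank _ _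
  -- second minor: rows {0,1,2,3}, columns {0,2,3,4}
  have hd2 : (!![(1:ℝ), -μ, a6, -μ; -μ, a8, -μ, a9; -μ, 1, μ, μ; a6, μ, 1, μ]).det = 0 := by
    have heq : !![(1:ℝ), -μ, a6, -μ; -μ, a8, -μ, a9; -μ, 1, μ, μ; a6, μ, 1, μ]
        = M.submatrix ![0,1,2,3] ![0,2,3,4] := by
      ext i j; fin_cases i <;> fin_cases j <;> rfl
    rw [heq]
    exact det_submatrix_eq_zero_of_rank_le hrank _ _
  simp [Matrix.det_succ_row_zero, Fin.sum_univ_succ, Fin.succAbove, Fin.castSucc, Fin.castAdd,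
    Fin.castLE, Matrix.cons_val_succ] at hd1 hd2
  ring_nf at hd1 hd2
  have key1 : (1 - μ) * (4 * μ ^ 2) *
      (a8 ^ 2 * (2 + 4 * μ) - (1 + μ - 3 * μ ^ 2 - μ ^ 3)) = 0 := by
    linear_combination (-(1 + μ) ^ 2) * hd1 +
      ((a8 ^ 2 - 1) * (a6 * (1 + μ) + (1 + μ - 4 * μ ^ 2))) * h6
  have key2 : (a8 + a9) * (4 * μ ^ 2 * (1 - μ) ^ 2 * (1 + 2 * μ)) = 0 := by
    linear_combination ((1 + μ) ^ 2) * hd2 -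
      (2 * μ ^ 2 * (a8 - a9) * (1 + μ) +
        (μ * a8 - a9) * (a6 * (1 + μ) + (1 + μ - 4 * μ ^ 2))) * h6
  constructor
  · have hne : (4 : ℝ) * μ ^ 2 * (1 - μ) ^ 2 * (1 + 2 * μ) ≠ 0 := by positivity
    have := (mul_eq_zero.1 key2).resolve_right hne
    linarith
  · have hne : (1 - μ) * (4 * μ ^ 2) ≠ 0 := by positivity
    have h0 : a8 ^ 2 * (2 + 4 * μ) - (1 + μ - 3 * μ ^ 2 - μ ^ 3) = 0 :=
      (mul_eq_zero.1 key1).resolve_left hne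
    have h2μ : (2 : ℝ) + 4 * μ ≠ 0 := by positivity
    rw [eq_div_iff h2μ]
    linarith
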